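/- There exists a real number b̃ > 1 such that for all a ∈ [0, 1) and all b ∈ [1, b̃], one has (4 − 5a)·log₁₀(b) ≤ B(a, b) − a, where B(a, b) = 4 − ((4 − a)²/(2·(1 − a)))·(b − √(b² − 12·(1 − a)·b/(4 − a)²)). -/
import Mathlib


/-- The quality-ratio bound function of the defection-free scheme. -/
noncomputable def B (a b : ℝ) : ℝ :=
  4 - ((4 - a) ^ 2 / (2 * (1 - a))) *
    (b - Real.sqrt (b ^ 2 - 12 * (1 - a) * b / (4 - a) ^ 2))

private lemma hpoly_aux {a : ℝ} (ha0 : 0 ≤ a) (hA : a ≤ 4/5) :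
    2 * (1.001 * (4 - a) ^ 2 - (4 - a) * (2 * (1 - a))) * (4 - 5 * a)
      + 0.01408 * (1 - a) ≤ 4.554 * ((1 - a) * (4 - a) ^ 2) := by
  have h08 : (0:ℝ) ≤ 0.8 - a := by linarith
  nlinarith [sq_nonneg (a - 0.37), mul_nonneg h08 (sq_nonneg (a - 0.37)),
    mul_nonneg ha0 (sq_nonneg (a - 0.37)), mul_nonneg ha0 h08]

private lemma hF_aux {a c : ℝ} (ha0 : 0 ≤ a) (hA : a ≤ 4/5)
    (hc2 : c * (2 * (1 - a)) = (4 - a) ^ 2) :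
    2 * (1.001 * c - (4 - a)) * (4 - 5 * a) + 0.00704 ≤ 2.277 * (4 - a) ^ 2 := by
  have h1a : (0:ℝ) < 1 - a := by linarith
  nlinarith [hpoly_aux ha0 hA, hc2, h1a]

private lemma sqrt_side_aux {T c S arg : ℝ} (hT2 : T ^ 2 ≤ c ^ 2 * arg)
    (hS2 : S ^ 2 = arg) (hcS0 : 0 ≤ c * S) (h : 0 < T) : T ≤ c * S := by
  nlinarith [hT2, hS2, hcS0, h]

set_option maxHeartbeats 1000000 in
/-- there exists `b̃ > 1` such that for all `a ∈ [0, 1)` and all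
`b ∈ [1, b̃]`, the ratio gain `B(a, b) − a` is at least `(4 − 5a)·log₁₀ b`. -/
theorem ratio_gain_log_lower_bound :
    ∃ btilde : ℝ, 1 < btilde ∧
      ∀ a b : ℝ, 0 ≤ a → a < 1 → 1 ≤ b → b ≤ btilde →
        (4 - 5 * a) * Real.logb 10 b ≤ B a b - a := by
  refine ⟨1.001, by norm_num, ?_⟩
  intro a b ha0 ha1 hb1 hb2
  have h1a : (0:ℝ) < 1 - a := by linarith
  have h4a : (0:ℝ) < 4 - a := by linarith
  have hbpos : (0:ℝ) < b := by linarith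
  -- log 10 ≥ 2.277
  have hlog2 : (0.6931471803 : ℝ) < Real.log 2 := Real.log_two_gt_d9
  have hlog10' : (23:ℝ) * Real.log 2 ≤ 7 * Real.log 10 := by
    have hpow : ((2:ℝ))^(23:ℕ) ≤ ((10:ℝ))^(7:ℕ) := by norm_num
    have := Real.log_le_log (by positivity) hpow
    rwa [Real.log_pow, Real.log_pow, Nat.cast_ofNat, Nat.cast_ofNat] at this
  have hg : (2.277:ℝ) ≤ Real.log 10 := by linarith
  have hgpos : (0:ℝ) < Real.log 10 := by linarith
  have hl0 : 0 ≤ Real.log b := Real.log_nonneg hb1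
  have hl1 : Real.log b ≤ b - 1 := Real.log_le_sub_one_of_pos hbpos
  rw [Real.logb, show B a b =
      4 - ((4 - a) ^ 2 / (2 * (1 - a))) *
        (b - Real.sqrt (b ^ 2 - 12 * (1 - a) * b / (4 - a) ^ 2)) from rfl]
  obtain ⟨c, hc⟩ : ∃ x : ℝ, x = (4 - a) ^ 2 / (2 * (1 - a)) := ⟨_, rfl⟩
  obtain ⟨m, hm⟩ : ∃ x : ℝ, x = Real.log b / Real.log 10 := ⟨_, rfl⟩
  obtain ⟨arg, harg⟩ : ∃ x : ℝ, x = b ^ 2 - 12 * (1 - a) * b / (4 - a) ^ 2 := ⟨_, rfl⟩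
  rw [← hc, ← hm, ← harg]
  obtain ⟨S, hSd⟩ : ∃ x : ℝ, x = Real.sqrt arg := ⟨_, rfl⟩
  rw [← hSd]
  have hc2 : c * (2 * (1 - a)) = (4 - a) ^ 2 := by
    rw [hc]; exact div_mul_cancel₀ _ (by positivity)
  have hcpos : 0 < c := by rw [hc]; positivity
  have hm0 : 0 ≤ m := by rw [hm]; positivity
  have hgm : Real.log 10 * m = Real.log b := by
    rw [hm]; field_simp
  have hm1 : 2.277 * m ≤ b - 1 := by
    linarith [mul_le_mul_of_nonneg_right hg hm0]
  have hm2 : m ≤ 0.00044 := by linarith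
  have harg0 : 0 ≤ arg := by
    have h34 : 12 * (1 - a) * b / (4 - a) ^ 2 ≤ (3/4) * b := by
      rw [div_le_iff₀ (by positivity)]
      have h6 : (0:ℝ) ≤ b * (6 * a + (3/4) * (a * a)) := by positivity
      linarith [h6]
    have hbb : 0 ≤ b * (b - 1) := mul_nonneg hbpos.le (by linarith)
    rw [harg]; linarith [h34, hbb, hb1]
  have hS0 : 0 ≤ S := hSd ▸ Real.sqrt_nonneg _
  have hS2 : S ^ 2 = arg := by rw [hSd]; exact Real.sq_sqrt harg0
  have hcge : 4 - a ≤ c := by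
    rw [hc, le_div_iff₀ (by positivity)]
    linarith [mul_nonneg h4a.le (show (0:ℝ) ≤ 2 + a by linarith)]
  have hcb4 : 0 ≤ c * b - (4 - a) := by
    have := mul_le_mul_of_nonneg_left hb1 hcpos.le
    linarith [this, hcge]
  -- key inequality
  have hkey : 2 * (c * b - (4 - a)) * ((4 - 5 * a) * m) + ((4 - 5 * a) * m) ^ 2
      ≤ (4 - a) ^ 2 * (b - 1) := by
    have hmm : m * m ≤ 0.00044 * m := by
      linarith [mul_nonneg hm0 (show (0:ℝ) ≤ 0.00044 - m by linarith)]
    rcases le_or_gt a (4/5) with hA | hA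
    · have h45 : (0:ℝ) ≤ 4 - 5 * a := by linarith
      have hcbu : c * b ≤ 1.001 * c := by
        have := mul_le_mul_of_nonneg_left hb2 hcpos.le
        linarith
      have hF : 2 * (c * b - (4 - a)) * (4 - 5 * a) + 0.00704 ≤ 2.277 * (4 - a) ^ 2 := by
        have h := mul_le_mul_of_nonneg_right
          (show c * b - (4 - a) ≤ 1.001 * c - (4 - a) by linarith) h45
        linarith [h, hF_aux ha0 hA hc2]
      have step1 : ((4 - 5 * a) * m) ^ 2 ≤ 16 * (m * m) := by
        linarith [mul_nonneg (mul_nonneg ha0 (show (0:ℝ) ≤ 8 - 5 * a by linarith))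
          (mul_nonneg hm0 hm0)]
      have step2 : 16 * (m * m) ≤ 0.00704 * m := by linarith [hmm]
      have step3 : (2 * (c * b - (4 - a)) * (4 - 5 * a)) * m
          ≤ (2.277 * (4 - a) ^ 2 - 0.00704) * m :=
        mul_le_mul_of_nonneg_right (by linarith) hm0
      have hb2m : (0:ℝ) ≤ b - 1 - 2.277 * m := by linarith
      have step4' : 0 ≤ (4 - a) ^ 2 * (b - 1 - 2.277 * m) := mul_nonneg (sq_nonneg _) hb2m
      have step4 : 2.277 * (4 - a) ^ 2 * m ≤ (4 - a) ^ 2 * (b - 1) := by linarith [step4']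
      linarith [step1, step2, step3, step4]
    · have h45 : 4 - 5 * a ≤ 0 := by linarith
      have hL0 : (4 - 5 * a) * m ≤ 0 := mul_nonpos_of_nonpos_of_nonneg h45 hm0
      have hcross : 2 * (c * b - (4 - a)) * ((4 - 5 * a) * m) ≤ 0 :=
        mul_nonpos_of_nonneg_of_nonpos (by linarith) hL0
      have hsq : ((4 - 5 * a) * m) ^ 2 ≤ m * m := by
        linarith [mul_nonneg (mul_nonneg (show (0:ℝ) ≤ 5 * a - 3 by linarith) h1a.le)
          (mul_nonneg hm0 hm0)]
      have h9 : 0 ≤ ((4 - a) ^ 2 - 9) * (b - 1) :=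
        mul_nonneg (by linarith [mul_pos h1a (show (0:ℝ) < 7 - a by linarith)])
          (by linarith)
      linarith [hsq, hcross, hmm, h9, hm1, hm0]
  -- from key to sqrt bound
  have hc2arg : c ^ 2 * arg = c ^ 2 * b ^ 2 - 6 * (c * b) := by
    rw [harg, hc]
    field_simp
    ring
  have hT2 : (c * b - (4 - a) + (4 - 5 * a) * m) ^ 2 ≤ c ^ 2 * arg := by
    have hid : c ^ 2 * b ^ 2 - 6 * (c * b) - (c * b - (4 - a) + (4 - 5 * a) * m) ^ 2
        = (4 - a) ^ 2 * (b - 1)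
          - (2 * (c * b - (4 - a)) * ((4 - 5 * a) * m) + ((4 - 5 * a) * m) ^ 2) := by
      linear_combination b * hc2
    linarith [hkey, hc2arg.ge, hc2arg.le]
  have hcS : c * b - (4 - a) + (4 - 5 * a) * m ≤ c * S := by
    rcases le_or_gt (c * b - (4 - a) + (4 - 5 * a) * m) 0 with h | h
    · linarith [mul_nonneg hcpos.le hS0]
    · exact sqrt_side_aux hT2 hS2 (mul_nonneg hcpos.le hS0) h
  have expand : 4 - c * (b - S) - a = (4 - a) - c * b + c * S := by ring
  linarith [hcS, expand]
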